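/- Let d be a prime. Then there exist d-adic integers a₁, a₂, …, a_{d−1} ∈ ℤ_d with a_i ≡ i (mod d) for each i, such that for every n ≥ 1 and every c ∈ ℤ, if c ≡ 0 (mod d^n) or c ≡ a_i (mod d^n) in ℤ_d for some 1 ≤ i ≤ d−1, then d^n ∈ D_{d,c}. -/

import Mathlib

/-- `W d c n = φ^n(0)` where `φ(x) = x^d + c`. -/
def W (d : ℕ) (c : ℤ) (n : ℕ) : ℤ := (fun x : ℤ => x ^ d + c)^[n] 0

/-- `D_{d,c} = {n : n ≥ 1 and n ∣ W_n}`. -/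
def Dset (d : ℕ) (c : ℤ) : Set ℕ := {n | 1 ≤ n ∧ (n : ℤ) ∣ W d c n}

lemma W_zero (d : ℕ) (c : ℤ) : W d c 0 = 0 := rfl

lemma W_succ (d : ℕ) (c : ℤ) (n : ℕ) : W d c (n + 1) = (W d c n) ^ d + c := by
  unfold W
  rw [Function.iterate_succ_apply']

lemma W_one (d : ℕ) (c : ℤ) (hd : d ≠ 0) : W d c 1 = c := by
  rw [W_succ, W_zero, zero_pow hd, zero_add]

/-- congruence in `c`. -/
lemma dvd_W_sub_W (d : ℕ) {M c c' : ℤ} (h : M ∣ c - c') :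
    ∀ k, M ∣ W d c k - W d c' k
  | 0 => by simp [W_zero]
  | (k + 1) => by
    rw [W_succ, W_succ]
    have h1 : M ∣ (W d c k) ^ d - (W d c' k) ^ d :=
      dvd_trans (dvd_W_sub_W d h k) (sub_dvd_pow_sub_pow _ _ d)
    have h2 := dvd_add h1 h
    convert h2 using 1
    · rfl
    ring

/-- congruence through iteration. -/
lemma dvd_iter_sub_iter (d : ℕ) (c : ℤ) {M x y : ℤ} (h : M ∣ x - y) :
    ∀ k, M ∣ (fun z : ℤ => z ^ d + c)^[k] x - (fun z : ℤ => z ^ d + c)^[k] y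
  | 0 => by simpa using h
  | (k + 1) => by
    rw [Function.iterate_succ_apply', Function.iterate_succ_apply']
    have h1 := dvd_iter_sub_iter d c h k
    have h2 : M ∣ ((fun z : ℤ => z ^ d + c)^[k] x) ^ d -
        ((fun z : ℤ => z ^ d + c)^[k] y) ^ d :=
      dvd_trans h1 (sub_dvd_pow_sub_pow _ _ d)
    simpa using h2

lemma W_add_eq (d : ℕ) (c : ℤ) (m k : ℕ) :
    W d c (m + k) = (fun z : ℤ => z ^ d + c)^[k] (W d c m) := by
  unfold W
  rw [add_comm, Function.iterate_add_apply]

lemma int_fermat (d : ℕ) [Fact d.Prime] (a : ℤ) : (d : ℤ) ∣ a ^ d - a := by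
  have h : ((a ^ d - a : ℤ) : ZMod d) = 0 := by
    push_cast
    rw [ZMod.pow_card]
    ring
  exact_mod_cast (ZMod.intCast_zmod_eq_zero_iff_dvd _ _).mp h

lemma dvd_W_sub_mul (d : ℕ) [Fact d.Prime] (c : ℤ) :
    ∀ k : ℕ, (d : ℤ) ∣ W d c k - (k : ℤ) * c
  | 0 => by simp [W_zero]
  | (k + 1) => by
    rw [W_succ]
    have h1 := int_fermat d (W d c k)
    have h2 := dvd_W_sub_mul d c k
    have := dvd_add h1 h2
    convert this using 1
    · rfl
    push_cast
    ring

lemma dvd_W_d (d : ℕ) [Fact d.Prime] (c : ℤ) : (d : ℤ) ∣ W d c d := by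
  have h1 := dvd_W_sub_mul d c d
  have h2 : (d : ℤ) ∣ (d : ℤ) * c := Dvd.intro c rfl
  have := dvd_add h1 h2
  simpa using this

lemma pow_expand (b t : ℤ) :
    ∀ k : ℕ, ∃ e : ℤ, (b + t) ^ (k + 1) = b ^ (k + 1) + ((k : ℤ) + 1) * b ^ k * t + t ^ 2 * e
  | 0 => ⟨0, by ring⟩
  | (k + 1) => by
    obtain ⟨e, he⟩ := pow_expand b t k
    refine ⟨e * b + ((k : ℤ) + 1) * b ^ k + t * e, ?_⟩
    have : (b + t) ^ (k + 1 + 1) = (b + t) ^ (k + 1) * (b + t) := by ring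
    rw [this, he]
    push_cast
    ring

/-- the lift lemma: `W_k(c+t) ≡ W_k(c) + t (mod d^{n+1})` when `d^n ∣ t`. -/
lemma lift_lemma (d : ℕ) (hd2 : 2 ≤ d) {n : ℕ} (hn : 1 ≤ n) {c t : ℤ}
    (ht : (d : ℤ) ^ n ∣ t) :
    ∀ k : ℕ, (d : ℤ) ^ (n + 1) ∣ W d (c + t) (k + 1) - (W d c (k + 1) + t)
  | 0 => by
    rw [W_one _ _ (by omega), W_one _ _ (by omega)]
    simp
  | (k + 1) => by
    have ih := lift_lemma d hd2 hn (c := c) ht k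
    obtain ⟨d', rfl⟩ : ∃ d', d = d' + 1 := ⟨d - 1, by omega⟩
    set A := W (d' + 1) (c + t) (k + 1) with hA
    set B := W (d' + 1) c (k + 1) with hB
    have h1 : ((d' + 1 : ℕ) : ℤ) ^ (n + 1) ∣ A ^ (d' + 1) - (B + t) ^ (d' + 1) :=
      dvd_trans ih (by simpa using sub_dvd_pow_sub_pow A (B + t) (d' + 1))
    obtain ⟨e, he⟩ := pow_expand B t d'
    have h2 : ((d' + 1 : ℕ) : ℤ) ^ (n + 1) ∣ (B + t) ^ (d' + 1) - B ^ (d' + 1) := by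
      rw [he]
      have hdt : ((d' + 1 : ℕ) : ℤ) ^ (n + 1) ∣ ((d' : ℤ) + 1) * B ^ d' * t := by
        obtain ⟨u, hu⟩ := ht
        refine ⟨B ^ d' * u, ?_⟩
        rw [hu]
        push_cast
        ring
      have htt : ((d' + 1 : ℕ) : ℤ) ^ (n + 1) ∣ t ^ 2 * e := by
        obtain ⟨u, hu⟩ := ht
        have : ((d' + 1 : ℕ) : ℤ) ^ (n + 1) ∣ ((d' + 1 : ℕ) : ℤ) ^ (2 * n) :=
          pow_dvd_pow _ (by omega)
        refine dvd_trans this ?_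
        refine ⟨u ^ 2 * e, ?_⟩
        rw [hu]
        ring
      have := dvd_add hdt htt
      convert this using 1
      · rfl
      ring
    have goal2 : W (d' + 1) (c + t) (k + 1 + 1) - (W (d' + 1) c (k + 1 + 1) + t) =
        (A ^ (d' + 1) - (B + t) ^ (d' + 1)) + ((B + t) ^ (d' + 1) - B ^ (d' + 1)) := by
      rw [W_succ (d' + 1) (c + t) (k + 1), W_succ (d' + 1) c (k + 1), ← hA, ← hB]
      ring
    rw [goal2]
    exact dvd_add h1 h2

/-- shift lemma: if `d^n ∣ W_M` then `W_{M+k} ≡ W_k (mod d^{n+1})` for `k ≥ 1`. -/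
lemma shift_lemma (d : ℕ) (hd2 : 2 ≤ d) {n M : ℕ} (hn : 1 ≤ n) {c : ℤ}
    (hM : (d : ℤ) ^ n ∣ W d c M) {k : ℕ} (hk : 1 ≤ k) :
    (d : ℤ) ^ (n + 1) ∣ W d c (M + k) - W d c k := by
  obtain ⟨j, rfl⟩ : ∃ j, k = 1 + j := ⟨k - 1, by omega⟩
  have key : (d : ℤ) ^ (n + 1) ∣ W d c (M + 1) - W d c 1 := by
    rw [W_succ, W_one _ _ (by omega)]
    have h1 : (d : ℤ) ^ (n * d) ∣ (W d c M) ^ d := by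
      rw [pow_mul]
      exact pow_dvd_pow_of_dvd hM d
    have h2 : (d : ℤ) ^ (n + 1) ∣ (d : ℤ) ^ (n * d) := pow_dvd_pow _ (by nlinarith)
    have := dvd_trans h2 h1
    convert this using 1
    · rfl
    ring
  have e1 : W d c (M + (1 + j)) = (fun z : ℤ => z ^ d + c)^[j] (W d c (M + 1)) := by
    rw [show M + (1 + j) = (M + 1) + j from by ring, W_add_eq]
  have e2 : W d c (1 + j) = (fun z : ℤ => z ^ d + c)^[j] (W d c 1) := by
    rw [W_add_eq]
  rw [e1, e2]
  exact dvd_iter_sub_iter d c key j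

/-- multiples lemma: if `d^n ∣ W_{d^n}` then `W_{k d^n} ≡ W_{d^n} (mod d^{n+1})`. -/
lemma mult_lemma (d : ℕ) (hd2 : 2 ≤ d) {n : ℕ} (hn : 1 ≤ n) {c : ℤ}
    (h : (d : ℤ) ^ n ∣ W d c (d ^ n)) :
    ∀ k : ℕ, (d : ℤ) ^ (n + 1) ∣ W d c ((k + 1) * d ^ n) - W d c (d ^ n)
  | 0 => by simp
  | (k + 1) => by
    have ih := mult_lemma d hd2 hn h k
    have hWk : (d : ℤ) ^ n ∣ W d c ((k + 1) * d ^ n) := by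
      have h1 : (d : ℤ) ^ n ∣ W d c ((k + 1) * d ^ n) - W d c (d ^ n) :=
        dvd_trans (pow_dvd_pow _ (by omega)) ih
      have := dvd_add h1 h
      simpa using this
    have hs := shift_lemma d hd2 hn hWk (k := d ^ n) (Nat.one_le_pow _ _ (by omega))
    rw [show (k + 1 + 1) * d ^ n = (k + 1) * d ^ n + d ^ n from by ring]
    exact hs

lemma step_up (d : ℕ) (hd2 : 2 ≤ d) {n : ℕ} (hn : 1 ≤ n) {c : ℤ}
    (h : (d : ℤ) ^ n ∣ W d c (d ^ n)) :
    (d : ℤ) ^ (n + 1) ∣ W d c (d ^ (n + 1)) - W d c (d ^ n) := by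
  have := mult_lemma d hd2 hn h (d - 1)
  rwa [show (d - 1 + 1) * d ^ n = d ^ (n + 1) from by
    rw [Nat.sub_add_cancel (by omega)]; ring] at this

/-- the recursively defined approximating sequence. -/
def cs (d : ℕ) (i : ℤ) : ℕ → ℤ
  | 0 => i
  | 1 => i
  | (n + 2) => cs d i (n + 1) - W d (cs d i (n + 1)) (d ^ (n + 1))

lemma cs_inv (d : ℕ) [Fact d.Prime] (i : ℤ) :
    ∀ n : ℕ, (d : ℤ) ^ n ∣ W d (cs d i n) (d ^ n)
  | 0 => by simp
  | 1 => by simpa using dvd_W_d d (cs d i 1)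
  | (n + 2) => by
    have hd2 : 2 ≤ d := (Fact.out : d.Prime).two_le
    have h := cs_inv d i (n + 1)
    set c := cs d i (n + 1) with hc
    have ht : (d : ℤ) ^ (n + 1) ∣ -W d c (d ^ (n + 1)) := (dvd_neg).mpr h
    have hlift := lift_lemma d hd2 (n := n + 1) (by omega) (c := c) ht (d ^ (n + 1) - 1)
    rw [show d ^ (n + 1) - 1 + 1 = d ^ (n + 1) from
      Nat.sub_add_cancel (Nat.one_le_pow _ _ (by omega))] at hlift
    have hcs : cs d i (n + 2) = c + -W d c (d ^ (n + 1)) := by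
      rw [show cs d i (n + 2) = c - W d c (d ^ (n + 1)) from rfl]; ring
    have h1 : (d : ℤ) ^ (n + 2) ∣ W d (cs d i (n + 2)) (d ^ (n + 1)) := by
      rw [hcs]
      have := hlift
      rw [show W d c (d ^ (n + 1)) + -W d c (d ^ (n + 1)) = 0 from by ring, sub_zero] at this
      exact this
    have h2 : (d : ℤ) ^ (n + 1) ∣ W d (cs d i (n + 2)) (d ^ (n + 1)) :=
      dvd_trans (pow_dvd_pow _ (by omega)) h1
    have h3 := step_up d hd2 (n := n + 1) (by omega) h2
    have := dvd_add h3 h1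
    simpa using this

lemma cs_compat (d : ℕ) [Fact d.Prime] (i : ℤ) :
    ∀ n : ℕ, (d : ℤ) ^ n ∣ cs d i (n + 1) - cs d i n
  | 0 => by simp [cs]
  | (n + 1) => by
    have h := cs_inv d i (n + 1)
    rw [show cs d i (n + 2) = cs d i (n + 1) - W d (cs d i (n + 1)) (d ^ (n + 1)) from rfl]
    simpa using (dvd_neg).mpr h

lemma cs_le (d : ℕ) [Fact d.Prime] (i : ℤ) {m n : ℕ} (h : m ≤ n) :
    (d : ℤ) ^ m ∣ cs d i n - cs d i m := by
  obtain ⟨j, rfl⟩ := Nat.exists_eq_add_of_le h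
  induction j with
  | zero => simp
  | succ j ih =>
    have h1 := cs_compat d i (m + j)
    have h2 : (d : ℤ) ^ m ∣ cs d i (m + j + 1) - cs d i (m + j) :=
      dvd_trans (pow_dvd_pow _ (by omega)) h1
    have := dvd_add h2 (ih (by omega))
    rw [show m + (j + 1) = m + j + 1 from rfl]
    convert this using 1
    · rfl
    ring

lemma dvd_W_of_dvd_c (d : ℕ) (hd : d ≠ 0) {M c : ℤ} (h : M ∣ c) :
    ∀ k, M ∣ W d c k
  | 0 => by simp [W_zero]
  | (k + 1) => by
    rw [W_succ]
    exact dvd_add (dvd_pow (dvd_W_of_dvd_c d hd h k) hd) h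

theorem powers_of_prime_degree (d : ℕ) [Fact d.Prime] :
    ∃ a : ℕ → ℤ_[d],
      (∀ i : ℕ, 1 ≤ i → i ≤ d - 1 → (d : ℤ_[d]) ∣ (a i - (i : ℤ_[d]))) ∧
      (∀ n : ℕ, 1 ≤ n → ∀ c : ℤ,
        ((d : ℤ) ^ n ∣ c ∨
          ∃ i : ℕ, 1 ≤ i ∧ i ≤ d - 1 ∧ (d : ℤ_[d]) ^ n ∣ ((c : ℤ_[d]) - a i)) →
        d ^ n ∈ Dset d c) := by
  have hp : d.Prime := Fact.out
  have hd2 : 2 ≤ d := hp.two_le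
  -- existence of limits
  have H : ∀ i : ℕ, ∃ L : ℤ_[d], ∀ n : ℕ,
      (d : ℤ_[d]) ^ n ∣ ((cs d (i : ℤ) n : ℤ) : ℤ_[d]) - L := by
    intro i
    set f : ℕ → ℤ_[d] := fun n => ((cs d (i : ℤ) n : ℤ) : ℤ_[d]) with hf
    have hcauchy : ∀ {m n : ℕ}, m ≤ n →
        f m ≡ f n [SMOD ((IsLocalRing.maximalIdeal ℤ_[d]) ^ m • ⊤ :
          Ideal ℤ_[d])] := by
      intro m n hmn
      simp only [← Ideal.one_eq_top, smul_eq_mul, mul_one, SModEq.sub_mem,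
        PadicInt.maximalIdeal_eq_span_p, Ideal.span_singleton_pow,
        Ideal.mem_span_singleton]
      have h1 : ((d : ℤ) ^ m : ℤ) ∣ cs d (i : ℤ) m - cs d (i : ℤ) n := by
        have := cs_le d (i : ℤ) hmn
        simpa using (dvd_neg).mpr this
      have h2 : ((d : ℤ_[d])) ^ m ∣ ((cs d (i : ℤ) m - cs d (i : ℤ) n : ℤ) : ℤ_[d]) := by
        rw [PadicInt.pow_p_dvd_int_iff]
        exact_mod_cast h1
      simpa [hf] using h2
    obtain ⟨L, hL⟩ := IsPrecomplete.prec inferInstance @hcauchy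
    refine ⟨L, fun n => ?_⟩
    have := hL n
    simp only [← Ideal.one_eq_top, smul_eq_mul, mul_one, SModEq.sub_mem,
      PadicInt.maximalIdeal_eq_span_p, Ideal.span_singleton_pow,
      Ideal.mem_span_singleton] at this
    simpa [hf] using this
  choose a ha using H
  refine ⟨a, ?_, ?_⟩
  · intro i _ _
    have h1 := ha i 1
    have h2 : (cs d (i : ℤ) 1 : ℤ) = (i : ℤ) := rfl
    rw [h2] at h1
    have h3 : (d : ℤ_[d]) ∣ (i : ℤ_[d]) - a i := by
      simpa using h1
    have := (dvd_neg).mpr h3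
    simpa using this
  · intro n hn c hc
    refine ⟨Nat.one_le_pow _ _ (by omega), ?_⟩
    have hcast : ((d ^ n : ℕ) : ℤ) = (d : ℤ) ^ n := by push_cast; ring
    rw [hcast]
    rcases hc with h | ⟨i, _, _, hdvd⟩
    · exact dvd_W_of_dvd_c d (by omega) h (d ^ n)
    · -- c ≡ cs d i n (mod d^n) over ℤ
      have h1 := ha i n
      have h2 : (d : ℤ_[d]) ^ n ∣ ((c : ℤ_[d]) - ((cs d (i : ℤ) n : ℤ) : ℤ_[d])) := by
        have := dvd_sub hdvd h1
        convert this using 1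
        ring
      have h3 : ((d : ℤ) ^ n) ∣ c - cs d (i : ℤ) n := by
        have h4 : (d : ℤ_[d]) ^ n ∣ ((c - cs d (i : ℤ) n : ℤ) : ℤ_[d]) := by
          push_cast
          exact h2
        rw [PadicInt.pow_p_dvd_int_iff] at h4
        exact_mod_cast h4
      have h5 := dvd_W_sub_W d h3 (d ^ n)
      have h6 := cs_inv d (i : ℤ) n
      have := dvd_add h5 h6
      simpa using this
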